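/- If e₁ and e₂ are nonzero orthogonal idempotents of an admissible Poisson algebra P (e₁·e₂ = e₂·e₁ = 0), then P decomposes as a direct sum P = (P¹_{0,0} ∩ P²_{0,0}) ⊕ P¹_{1,1} ⊕ P²_{1,1}, where Pⁱ_{0,0} = {x : eᵢ·x = x·eᵢ = 0} and Pⁱ_{1,1} = {x : eᵢ·x = x·eᵢ = x}. Moreover P¹_{1,1} ⊆ P²_{0,0}. -/
import Mathlib


variable {K : Type*} [Field K] {P : Type*} [AddCommGroup P] [Module K P]

/-- The associator of a bilinear multiplication. -/
def assocOf (m : P →ₗ[K] P →ₗ[K] P) (X Y Z : P) : P := m (m X Y) Z - m X (m Y Z)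

/-- Admissible Poisson algebra condition:
`3 A(X,Y,Z) = (X·Z)·Y + (Y·Z)·X - (Y·X)·Z - (Z·X)·Y`. -/
def IsAdmissible (m : P →ₗ[K] P →ₗ[K] P) : Prop :=
  ∀ X Y Z : P, (3 : ℤ) • assocOf m X Y Z =
    m (m X Z) Y + m (m Y Z) X - m (m Y X) Z - m (m Z X) Y

/-- The antisymmetrized bracket `{X,Y} = (X·Y - Y·X)/2`. -/
def brOf (m : P →ₗ[K] P →ₗ[K] P) (X Y : P) : P := (2 : K)⁻¹ • (m X Y - m Y X)

/-- The symmetrized product `X∙Y = (X·Y + Y·X)/2`. -/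
def bulOf (m : P →ₗ[K] P →ₗ[K] P) (X Y : P) : P := (2 : K)⁻¹ • (m X Y + m Y X)

lemma smul_cancelP {c : K} (hc : c ≠ 0) {a b : P} (h : c • a = c • b) : a = b := by
  have := congrArg (fun v => c⁻¹ • v) h
  simpa [smul_smul, inv_mul_cancel₀ hc] using this

section key
variable (h2 : (2 : K) ≠ 0) (h3 : (3 : K) ≠ 0)
  (m : P →ₗ[K] P →ₗ[K] P) (hm : IsAdmissible m) (e : P) (he : m e e = e)

include h3 hm he in
lemma keyA : ∀ z : P,
    m (m e z) e + m (m z e) e - m e (m e z) - m e (m z e) = m z e - m e z := by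
  intro z
  have i1 := hm e e z
  have i2 := hm e z e
  have i3 := hm z e e
  unfold assocOf at i1 i2 i3
  rw [he] at i1 i2 i3
  apply smul_cancelP h3
  linear_combination (norm := module) i1 + i2 + i3

include h3 hm he in
lemma keyB : ∀ z : P,
    m e (m e z) + m e (m z e) + m (m e z) e + m (m z e) e
      = (2 : K) • (m e z + m z e) := by
  intro z
  have i1 := hm e e z
  have i2 := hm e z e
  have i3 := hm z e e
  unfold assocOf at i1 i2 i3
  rw [he] at i1 i2 i3
  apply smul_cancelP h3
  linear_combination (norm := module) (2:ℤ) • i3 - i1 - i2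

include h3 hm he in
lemma keyComm : ∀ x : P, m x e = m e x := by
  intro x
  set y : P := m e x + m x e - x with hy
  have huy : m y e - m e y = 0 := by
    have h := keyA h3 m hm e he x
    have h' : m y e - m e y =
        (m (m e x) e + m (m x e) e - m e (m e x) - m e (m x e)) - (m x e - m e x) := by
      simp only [hy, map_add, map_sub, LinearMap.add_apply, LinearMap.sub_apply]
      abel
    rw [h', h, sub_self]
  have hx : (m e y + m y e) - y = x := by
    have h := keyB h3 m hm e he x
    have h' : m e y + m y e =
        (m e (m e x) + m e (m x e) + m (m e x) e + m (m x e) e) - (m e x + m x e) := by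
      simp only [hy, map_add, map_sub, LinearMap.add_apply, LinearMap.sub_apply]
      abel
    rw [h] at h'
    rw [h', hy]
    module
  have hA := keyA h3 m hm e he y
  have hz : m x e - m e x = 0 := by
    calc m x e - m e x
        = m ((m e y + m y e) - y) e - m e ((m e y + m y e) - y) := by rw [hx]
      _ = (m (m e y) e + m (m y e) e - m e (m e y) - m e (m y e)) - (m y e - m e y) := by
          simp only [map_add, map_sub, LinearMap.add_apply, LinearMap.sub_apply]
          abel
      _ = (m y e - m e y) - (m y e - m e y) := by rw [hA]
      _ = 0 := sub_self _
  exact sub_eq_zero.mp hz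

include h2 h3 hm he in
lemma keyIdem : ∀ x : P, m e (m e x) = m e x := by
  intro x
  have hc := keyComm h3 m hm e he
  have h := keyB h3 m hm e he x
  rw [hc x, hc (m e x)] at h
  apply smul_cancelP h2
  apply smul_cancelP h2
  linear_combination (norm := module) h

end key

/-- for nonzero orthogonal idempotents `e₁, e₂` of an admissible
Poisson algebra, `P = (P¹₀₀ ∩ P²₀₀) ⊕ P¹₁₁ ⊕ P²₁₁`, and `P¹₁₁ ⊆ P²₀₀`. -/
theorem stmt11 (h2 : (2 : K) ≠ 0) (h3 : (3 : K) ≠ 0)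
    (m : P →ₗ[K] P →ₗ[K] P) (hm : IsAdmissible m)
    (e₁ e₂ : P) (he₁0 : e₁ ≠ 0) (he₂0 : e₂ ≠ 0)
    (he₁ : m e₁ e₁ = e₁) (he₂ : m e₂ e₂ = e₂)
    (horth : m e₁ e₂ = 0 ∧ m e₂ e₁ = 0) :
    (∀ x : P, ∃! t : P × P × P,
      (m e₁ t.1 = 0 ∧ m t.1 e₁ = 0 ∧ m e₂ t.1 = 0 ∧ m t.1 e₂ = 0) ∧
      (m e₁ t.2.1 = t.2.1 ∧ m t.2.1 e₁ = t.2.1) ∧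
      (m e₂ t.2.2 = t.2.2 ∧ m t.2.2 e₂ = t.2.2) ∧
      x = t.1 + t.2.1 + t.2.2) ∧
    (∀ x : P, m e₁ x = x → m x e₁ = x → m e₂ x = 0 ∧ m x e₂ = 0) := by
  obtain ⟨ho12, ho21⟩ := horth
  have F1 := keyComm h3 m hm e₁ he₁
  have F2 := keyComm h3 m hm e₂ he₂
  have G1 := keyIdem h2 h3 m hm e₁ he₁
  have G2 := keyIdem h2 h3 m hm e₂ he₂
  -- e₁ + e₂ is idempotent
  have hee : m (e₁ + e₂) (e₁ + e₂) = e₁ + e₂ := by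
    simp only [map_add, LinearMap.add_apply, he₁, he₂, ho12, ho21]
    abel
  have Ge := keyIdem h2 h3 m hm (e₁ + e₂) hee
  -- sum of mixed compositions vanishes
  have hsum : ∀ x : P, m e₁ (m e₂ x) + m e₂ (m e₁ x) = 0 := by
    intro x
    have h := Ge x
    simp only [map_add, LinearMap.add_apply] at h
    rw [G1 x, G2 x] at h
    linear_combination (norm := module) h
  -- mixed compositions are equal
  have heq : ∀ x : P, m e₂ (m e₁ x) = m e₁ (m e₂ x) := by
    intro x
    have i := hm e₁ x e₂
    unfold assocOf at i
    rw [ho12, ho21, F2 x, F1 x, F1 (m e₂ x), F2 (m e₁ x)] at i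
    simp only [map_zero, LinearMap.zero_apply] at i
    have h4 : (4 : K) ≠ 0 := by
      have : (4 : K) = 2 * 2 := by norm_num
      rw [this]; exact mul_ne_zero h2 h2
    apply smul_cancelP h4
    linear_combination (norm := module) i
  have hcross1 : ∀ x : P, m e₁ (m e₂ x) = 0 := by
    intro x
    apply smul_cancelP h2
    have := hsum x
    rw [heq x] at this
    linear_combination (norm := module) this
  have hcross2 : ∀ x : P, m e₂ (m e₁ x) = 0 := by
    intro x
    rw [heq x]; exact hcross1 x
  constructor
  · intro x
    refine ⟨(x - m e₁ x - m e₂ x, (m e₁ x, m e₂ x)), ⟨⟨?_, ?_, ?_, ?_⟩, ⟨?_, ?_⟩, ⟨?_, ?_⟩, ?_⟩, ?_⟩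
    · simp only [map_sub]
      rw [G1 x, hcross1 x]
      abel
    · rw [F1]
      simp only [map_sub]
      rw [G1 x, hcross1 x]
      abel
    · simp only [map_sub]
      rw [G2 x, hcross2 x]
      abel
    · rw [F2]
      simp only [map_sub]
      rw [G2 x, hcross2 x]
      abel
    · exact G1 x
    · rw [F1]; exact G1 x
    · exact G2 x
    · rw [F2]; exact G2 x
    · module
    · rintro ⟨a, b, c⟩ ⟨⟨ha1, -, ha2, -⟩, ⟨hb1, -⟩, ⟨hc2, -⟩, hx⟩
      dsimp only at ha1 ha2 hb1 hc2 hx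
      have hb : m e₁ x = b := by
        rw [hx]
        simp only [map_add]
        rw [ha1, hb1]
        have : m e₁ c = 0 := by rw [← hc2]; exact hcross1 c
        rw [this]; abel
      have hc : m e₂ x = c := by
        rw [hx]
        simp only [map_add]
        rw [ha2, hc2]
        have : m e₂ b = 0 := by rw [← hb1]; exact hcross2 b
        rw [this]; abel
      have ha : x - m e₁ x - m e₂ x = a := by rw [hb, hc, hx]; abel
      simp only [Prod.mk.injEq]
      exact ⟨ha.symm, hb.symm, hc.symm⟩
  · intro x hx1 hx1'
    have h := hcross2 x
    rw [hx1] at h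
    exact ⟨h, by rw [F2]; exact h⟩
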